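/- arXiv:1301.2358 — 2 statements merged into one kernel-verified Lean document; each statement's English description precedes it below -/
import Mathlib

section
/- Let 0 < γ < 1 and let f ∈ L²(ℝᵈ) with Fourier transform f̂ ∈ C¹(ℝᵈ \ {0}) satisfying |k|^{1-γ} ∂f̂ ∈ L¹(ℝᵈ; ℂᵈ) and |k|^{-γ} f̂ ∈ L¹(ℝᵈ). Then there is a constant C(γ) depending only on γ (and d) such that for all x ≠ 0, |f(x)| ≤ C(γ) |x|^{-γ} ( ‖|k|^{-γ} f̂‖_{L¹} + ‖|k|^{1-γ} ∂f̂‖_{L¹} ). -/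
open MeasureTheory
open scoped RealInnerProductSpace
open scoped RealInnerProductSpace

lemma frac_seg_bound {d : ℕ} {γ : ℝ} (hγ1 : γ < 1)
    (fhat : EuclideanSpace ℝ (Fin d) → ℂ) (hC1 : ContDiffOn ℝ 1 fhat {0}ᶜ)
    (h : EuclideanSpace ℝ (Fin d)) (hr : 0 < ‖h‖) (k : EuclideanSpace ℝ (Fin d))
    (hk : 2 * ‖h‖ < ‖k‖) :
    ‖fhat (k + h) - fhat k‖ ≤
      ∫ t in (0:ℝ)..1, ‖h‖ ^ γ * (‖k + t • h‖ ^ (1 - γ) * ‖fderiv ℝ fhat (k + t • h)‖) := by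
  have hopen : IsOpen ({0}ᶜ : Set (EuclideanSpace ℝ (Fin d))) := isOpen_compl_singleton
  have hseg : ∀ t ∈ Set.Icc (0:ℝ) 1, ‖h‖ ≤ ‖k + t • h‖ := by
    intro t ht
    have h1 : ‖t • h‖ ≤ ‖h‖ := by
      rw [norm_smul, Real.norm_eq_abs, abs_of_nonneg ht.1]
      nlinarith [ht.2, hr]
    have h2 : ‖k‖ ≤ ‖k + t • h‖ + ‖t • h‖ := by
      have := norm_add_le (k + t • h) (-(t • h))
      simpa using this
    linarith
  have hmem : ∀ t ∈ Set.Icc (0:ℝ) 1, k + t • h ∈ ({0}ᶜ : Set (EuclideanSpace ℝ (Fin d))) := by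
    intro t ht h0
    have := hseg t ht
    rw [Set.mem_singleton_iff.mp h0, norm_zero] at this
    linarith
  have hderiv : ∀ t ∈ Set.uIcc (0:ℝ) 1,
      HasDerivAt (fun s : ℝ => fhat (k + s • h)) ((fderiv ℝ fhat (k + t • h)) h) t := by
    intro t ht
    rw [Set.uIcc_of_le (zero_le_one)] at ht
    have hdiff : DifferentiableAt ℝ fhat (k + t • h) :=
      (hC1.contDiffAt (hopen.mem_nhds (hmem t ht))).differentiableAt one_ne_zero
    have hpath : HasDerivAt (fun s : ℝ => k + s • h) h t := by
      have : HasDerivAt (fun s : ℝ => s • h) ((1:ℝ) • h) t := (hasDerivAt_id t).smul_const h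
      simpa using this.const_add k
    exact hdiff.hasFDerivAt.comp_hasDerivAt t hpath
  have hcontf : ContinuousOn (fderiv ℝ fhat) {0}ᶜ :=
    hC1.continuousOn_fderiv_of_isOpen hopen le_rfl
  have hpathc : Continuous (fun t : ℝ => k + t • h) := by continuity
  have hcontD : ContinuousOn (fun t : ℝ => fderiv ℝ fhat (k + t • h)) (Set.Icc 0 1) :=
    hcontf.comp hpathc.continuousOn hmem
  have hcontDn : ContinuousOn (fun t : ℝ => ‖fderiv ℝ fhat (k + t • h)‖) (Set.Icc 0 1) :=
    hcontD.norm
  have hintD : IntervalIntegrable (fun t : ℝ => (fderiv ℝ fhat (k + t • h)) h) volume 0 1 := by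
    apply ContinuousOn.intervalIntegrable
    rw [Set.uIcc_of_le (zero_le_one)]
    exact hcontD.clm_apply continuousOn_const
  have hftc : fhat (k + h) - fhat k = ∫ t in (0:ℝ)..1, (fderiv ℝ fhat (k + t • h)) h := by
    rw [intervalIntegral.integral_eq_sub_of_hasDerivAt hderiv hintD]
    norm_num
  rw [hftc]
  calc ‖∫ t in (0:ℝ)..1, (fderiv ℝ fhat (k + t • h)) h‖
      ≤ ∫ t in (0:ℝ)..1, ‖(fderiv ℝ fhat (k + t • h)) h‖ :=
        intervalIntegral.norm_integral_le_integral_norm zero_le_one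
    _ ≤ ∫ t in (0:ℝ)..1, ‖h‖ ^ γ * (‖k + t • h‖ ^ (1 - γ) * ‖fderiv ℝ fhat (k + t • h)‖) := by
        apply intervalIntegral.integral_mono_on zero_le_one
        · apply ContinuousOn.intervalIntegrable
          rw [Set.uIcc_of_le (zero_le_one)]
          exact (hcontD.clm_apply continuousOn_const).norm
        · apply ContinuousOn.intervalIntegrable
          rw [Set.uIcc_of_le (zero_le_one)]
          apply ContinuousOn.mul continuousOn_const
          apply ContinuousOn.mul _ hcontDn
          intro t ht
          apply ContinuousAt.continuousWithinAt
          exact ContinuousAt.comp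
            (Real.continuousAt_rpow_const _ _ (Or.inr (by linarith)))
            hpathc.norm.continuousAt
        · intro t ht
          have hy : ‖h‖ ≤ ‖k + t • h‖ := hseg t ht
          have hy0 : (0:ℝ) < ‖k + t • h‖ := lt_of_lt_of_le hr hy
          have hop : ‖(fderiv ℝ fhat (k + t • h)) h‖ ≤ ‖fderiv ℝ fhat (k + t • h)‖ * ‖h‖ :=
            ContinuousLinearMap.le_opNorm _ h
          have key : ‖h‖ ≤ ‖h‖ ^ γ * ‖k + t • h‖ ^ (1 - γ) := by
            have h1 : ‖h‖ = ‖h‖ ^ γ * ‖h‖ ^ (1 - γ) := by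
              rw [← Real.rpow_add hr]; norm_num
            conv_lhs => rw [h1]
            apply mul_le_mul_of_nonneg_left _ (Real.rpow_nonneg (norm_nonneg _) _)
            exact Real.rpow_le_rpow (le_of_lt hr) hy (by linarith)
          calc ‖(fderiv ℝ fhat (k + t • h)) h‖
              ≤ ‖fderiv ℝ fhat (k + t • h)‖ * ‖h‖ := hop
            _ ≤ ‖fderiv ℝ fhat (k + t • h)‖ * (‖h‖ ^ γ * ‖k + t • h‖ ^ (1 - γ)) :=
                mul_le_mul_of_nonneg_left key (norm_nonneg _)
            _ = ‖h‖ ^ γ * (‖k + t • h‖ ^ (1 - γ) * ‖fderiv ℝ fhat (k + t • h)‖) := by ring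

lemma frac_seg_bound' {d : ℕ} {γ : ℝ} (hγ1 : γ < 1)
    (fhat : EuclideanSpace ℝ (Fin d) → ℂ) (hC1 : ContDiffOn ℝ 1 fhat {0}ᶜ)
    (h : EuclideanSpace ℝ (Fin d)) (hr : 0 < ‖h‖) (k : EuclideanSpace ℝ (Fin d))
    (hk : 2 * ‖h‖ < ‖k‖) :
    ENNReal.ofReal ‖fhat (k + h) - fhat k‖ ≤
      ENNReal.ofReal (‖h‖ ^ γ) * ∫⁻ t in Set.Ioc (0:ℝ) 1,
        ENNReal.ofReal (‖k + t • h‖ ^ (1 - γ) * ‖fderiv ℝ fhat (k + t • h)‖) := by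
  have hopen : IsOpen ({0}ᶜ : Set (EuclideanSpace ℝ (Fin d))) := isOpen_compl_singleton
  have hseg : ∀ t ∈ Set.Icc (0:ℝ) 1, ‖h‖ ≤ ‖k + t • h‖ := by
    intro t ht
    have h1 : ‖t • h‖ ≤ ‖h‖ := by
      rw [norm_smul, Real.norm_eq_abs, abs_of_nonneg ht.1]
      nlinarith [ht.2, hr]
    have h2 : ‖k‖ ≤ ‖k + t • h‖ + ‖t • h‖ := by
      have := norm_add_le (k + t • h) (-(t • h))
      simpa using this
    linarith
  have hmem : ∀ t ∈ Set.Icc (0:ℝ) 1, k + t • h ∈ ({0}ᶜ : Set (EuclideanSpace ℝ (Fin d))) := by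
    intro t ht h0
    have := hseg t ht
    rw [Set.mem_singleton_iff.mp h0, norm_zero] at this
    linarith
  have hcontf : ContinuousOn (fderiv ℝ fhat) {0}ᶜ :=
    hC1.continuousOn_fderiv_of_isOpen hopen le_rfl
  have hpathc : Continuous (fun t : ℝ => k + t • h) := by continuity
  have hcontG : ContinuousOn
      (fun t : ℝ => ‖k + t • h‖ ^ (1 - γ) * ‖fderiv ℝ fhat (k + t • h)‖) (Set.Icc 0 1) := by
    apply ContinuousOn.mul
    · intro t ht
      apply ContinuousAt.continuousWithinAt
      exact ContinuousAt.comp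
        (Real.continuousAt_rpow_const _ _ (Or.inr (by linarith)))
        hpathc.norm.continuousAt
    · exact (hcontf.comp hpathc.continuousOn hmem).norm
  have hint : IntegrableOn
      (fun t : ℝ => ‖h‖ ^ γ * (‖k + t • h‖ ^ (1 - γ) * ‖fderiv ℝ fhat (k + t • h)‖))
      (Set.Ioc (0:ℝ) 1) volume := by
    apply IntegrableOn.mono_set _ Set.Ioc_subset_Icc_self
    exact (continuousOn_const.mul hcontG).integrableOn_compact isCompact_Icc
  have hb := frac_seg_bound hγ1 fhat hC1 h hr k hk
  rw [intervalIntegral.integral_of_le zero_le_one] at hb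
  calc ENNReal.ofReal ‖fhat (k + h) - fhat k‖
      ≤ ENNReal.ofReal (∫ t in Set.Ioc (0:ℝ) 1,
          ‖h‖ ^ γ * (‖k + t • h‖ ^ (1 - γ) * ‖fderiv ℝ fhat (k + t • h)‖)) :=
        ENNReal.ofReal_le_ofReal hb
    _ = ∫⁻ t in Set.Ioc (0:ℝ) 1, ENNReal.ofReal
          (‖h‖ ^ γ * (‖k + t • h‖ ^ (1 - γ) * ‖fderiv ℝ fhat (k + t • h)‖)) := by
        apply MeasureTheory.ofReal_integral_eq_lintegral_ofReal hint
        apply Filter.Eventually.of_forall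
        intro t
        positivity
    _ = ENNReal.ofReal (‖h‖ ^ γ) * ∫⁻ t in Set.Ioc (0:ℝ) 1,
          ENNReal.ofReal (‖k + t • h‖ ^ (1 - γ) * ‖fderiv ℝ fhat (k + t • h)‖) := by
        rw [← MeasureTheory.lintegral_const_mul' _ _ ENNReal.ofReal_ne_top]
        congr 1
        ext t
        rw [ENNReal.ofReal_mul (Real.rpow_nonneg (norm_nonneg _) _)]

set_option maxHeartbeats 2000000 in
/-- Fractional Fourier decay (Lemma `decay`): if `0 < γ < 1`, `f̂ ∈ L²(ℝᵈ)` is `C¹` away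
from `0`, with `|k|^{1-γ}∂f̂` and `|k|^{-γ}f̂` integrable, then the (inverse) Fourier
transform `f(x) = ∫ f̂(k) e^{ik·x} dk` satisfies
`|f(x)| ≤ C(γ)|x|^{-γ}(‖|k|^{-γ}f̂‖₁ + ‖|k|^{1-γ}∂f̂‖₁)` for all `x ≠ 0`. -/
theorem fractional_fourier_decay (d : ℕ) (γ : ℝ) (hγ0 : 0 < γ) (hγ1 : γ < 1) :
    ∃ C > 0, ∀ fhat : EuclideanSpace ℝ (Fin d) → ℂ,
      MemLp fhat 2 (volume : Measure (EuclideanSpace ℝ (Fin d))) →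
      ContDiffOn ℝ 1 fhat {0}ᶜ →
      Integrable (fun k : EuclideanSpace ℝ (Fin d) =>
        ‖k‖ ^ (1 - γ) * ‖fderiv ℝ fhat k‖) volume →
      Integrable (fun k : EuclideanSpace ℝ (Fin d) => ‖k‖ ^ (-γ) * ‖fhat k‖) volume →
      ∀ x : EuclideanSpace ℝ (Fin d), x ≠ 0 →
        ‖∫ k : EuclideanSpace ℝ (Fin d),
            fhat k * Complex.exp (Complex.I * (⟪k, x⟫ : ℝ))‖ ≤
          C * ‖x‖ ^ (-γ) *
            ((∫ k : EuclideanSpace ℝ (Fin d), ‖k‖ ^ (-γ) * ‖fhat k‖) +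
             (∫ k : EuclideanSpace ℝ (Fin d), ‖k‖ ^ (1 - γ) * ‖fderiv ℝ fhat k‖)) := by
  classical
  set c : ℝ := ‖Complex.exp (-Complex.I) - 1‖ with hcdef
  have hc0 : 0 < c := by
    rw [hcdef, norm_pos_iff, sub_ne_zero]
    intro hE
    have him := congrArg Complex.im hE
    have hsin : Real.sin 1 > 0 :=
      Real.sin_pos_of_pos_of_lt_pi one_pos (by linarith [Real.pi_gt_three])
    simp [Complex.exp_im] at him
    linarith
  have h3γ : (0:ℝ) < 3 ^ γ := Real.rpow_pos_of_pos (by norm_num) γ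
  refine ⟨c⁻¹ * (2 * 3 ^ γ + 1), by positivity, ?_⟩
  intro fhat hL2 hC1 hI2 hI1 x hx
  have hI1nn : 0 ≤ ∫ k : EuclideanSpace ℝ (Fin d), ‖k‖ ^ (-γ) * ‖fhat k‖ :=
    integral_nonneg fun k => by positivity
  have hI2nn : 0 ≤ ∫ k : EuclideanSpace ℝ (Fin d), ‖k‖ ^ (1 - γ) * ‖fderiv ℝ fhat k‖ :=
    integral_nonneg fun k => by positivity
  set I1 := ∫ k : EuclideanSpace ℝ (Fin d), ‖k‖ ^ (-γ) * ‖fhat k‖ with hI1def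
  set I2 := ∫ k : EuclideanSpace ℝ (Fin d), ‖k‖ ^ (1 - γ) * ‖fderiv ℝ fhat k‖ with hI2def
  have hx0 : (0:ℝ) < ‖x‖ := norm_pos_iff.mpr hx
  have hxγ : (0:ℝ) < ‖x‖ ^ (-γ) := Real.rpow_pos_of_pos hx0 _
  by_cases hd0 : d = 0
  · subst hd0
    exact absurd (Subsingleton.elim x 0) hx
  have hd : 0 < d := Nat.pos_of_ne_zero hd0
  haveI : Nonempty (Fin d) := ⟨⟨0, hd⟩⟩
  have h0meas : volume ({(0 : EuclideanSpace ℝ (Fin d))} : Set (EuclideanSpace ℝ (Fin d))) = 0 :=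
    measure_singleton 0
  have hexp1 : ∀ t : ℝ, ‖Complex.exp (Complex.I * (t:ℂ))‖ = 1 := by
    intro t
    rw [Complex.norm_exp]
    simp
  by_cases hint : Integrable fhat volume
  swap
  · -- non-integrable case: integral is 0
    have hnot : ¬ Integrable
        (fun k : EuclideanSpace ℝ (Fin d) => fhat k * Complex.exp (Complex.I * (⟪k, x⟫ : ℝ)))
        volume := by
      intro hφ
      apply hint
      have h2 := hφ.norm
      have heq : (fun k : EuclideanSpace ℝ (Fin d) =>
          ‖fhat k * Complex.exp (Complex.I * (⟪k, x⟫ : ℝ))‖) = fun k => ‖fhat k‖ := by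
        funext k
        rw [norm_mul, hexp1, mul_one]
      rw [heq] at h2
      exact (integrable_norm_iff hL2.aestronglyMeasurable).mp h2
    rw [integral_undef hnot, norm_zero]
    have := mul_nonneg (mul_nonneg (by positivity : (0:ℝ) ≤ c⁻¹ * (2 * 3 ^ γ + 1)) hxγ.le)
      (add_nonneg hI1nn hI2nn)
    linarith
  -- the shift vector
  set h : EuclideanSpace ℝ (Fin d) := (‖x‖ ^ 2)⁻¹ • x with hhdef
  have hhn : ‖h‖ = ‖x‖⁻¹ := by
    rw [hhdef, norm_smul, Real.norm_eq_abs, abs_of_nonneg (by positivity)]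
    field_simp
  have hr : 0 < ‖h‖ := by rw [hhn]; positivity
  have hinner : ⟪h, x⟫ = (1:ℝ) := by
    rw [hhdef, real_inner_smul_left, real_inner_self_eq_norm_sq]
    field_simp
  set φ : EuclideanSpace ℝ (Fin d) → ℂ :=
    fun k => fhat k * Complex.exp (Complex.I * (⟪k, x⟫ : ℝ)) with hφdef
  have hexpc : Continuous (fun k : EuclideanSpace ℝ (Fin d) =>
      Complex.exp (Complex.I * (⟪k, x⟫ : ℝ))) := by
    apply Complex.continuous_exp.comp
    exact (continuous_const.mul (Complex.continuous_ofReal.comp (continuous_id.inner continuous_const)))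
  have hφm : AEStronglyMeasurable φ volume :=
    hL2.aestronglyMeasurable.mul hexpc.aestronglyMeasurable
  have hφnorm : ∀ k, ‖φ k‖ = ‖fhat k‖ := by
    intro k
    rw [hφdef, norm_mul, hexp1, mul_one]
  have hφint : Integrable φ volume := by
    refine (integrable_norm_iff hφm).mp ?_
    have : (fun k => ‖φ k‖) = fun k => ‖fhat k‖ := funext hφnorm
    rw [this]
    exact hint.norm
  have hψint0 : Integrable (fun k : EuclideanSpace ℝ (Fin d) => fhat (k + h)) volume :=
    hint.comp_add_right h
  have hψint : Integrable (fun k : EuclideanSpace ℝ (Fin d) =>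
      fhat (k + h) * Complex.exp (Complex.I * (⟪k, x⟫ : ℝ))) volume := by
    refine (integrable_norm_iff (hψint0.aestronglyMeasurable.mul hexpc.aestronglyMeasurable)).mp ?_
    simp only [Pi.mul_apply, norm_mul, hexp1, mul_one]
    exact hψint0.norm
  -- shift identity
  have htrans : ∫ k, φ (k + h) = ∫ k, φ k := integral_add_right_eq_self φ h
  have hshift : ∀ k : EuclideanSpace ℝ (Fin d), φ (k + h) =
      Complex.exp Complex.I * (fhat (k + h) * Complex.exp (Complex.I * (⟪k, x⟫ : ℝ))) := by
    intro k
    have hip : ⟪k + h, x⟫ = ⟪k, x⟫ + (1:ℝ) := by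
      rw [inner_add_left, hinner]
    rw [hφdef]
    simp only [hip]
    push_cast
    rw [mul_add, Complex.exp_add]
    ring
  have hψval : ∫ k : EuclideanSpace ℝ (Fin d),
      fhat (k + h) * Complex.exp (Complex.I * (⟪k, x⟫ : ℝ)) =
      Complex.exp (-Complex.I) * ∫ k, φ k := by
    have h1 : ∫ k, φ (k + h) = Complex.exp Complex.I * ∫ k : EuclideanSpace ℝ (Fin d),
        fhat (k + h) * Complex.exp (Complex.I * (⟪k, x⟫ : ℝ)) := by
      rw [← integral_const_mul]
      exact integral_congr_ae (Filter.Eventually.of_forall hshift)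
    have h2 := htrans
    rw [h1] at h2
    have h3 : Complex.exp (-Complex.I) * (Complex.exp Complex.I * ∫ k : EuclideanSpace ℝ (Fin d),
        fhat (k + h) * Complex.exp (Complex.I * (⟪k, x⟫ : ℝ))) =
        Complex.exp (-Complex.I) * ∫ k, φ k := by rw [h2]
    rw [← mul_assoc, ← Complex.exp_add] at h3
    simpa using h3
  set Δ : EuclideanSpace ℝ (Fin d) → ℂ := fun k => fhat (k + h) - fhat k with hΔdef
  have hΔint : Integrable Δ volume := hψint0.sub hint
  have hdiff : (Complex.exp (-Complex.I) - 1) * ∫ k, φ k =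
      ∫ k, Δ k * Complex.exp (Complex.I * (⟪k, x⟫ : ℝ)) := by
    rw [sub_mul, one_mul, ← hψval, ← integral_sub hψint hφint]
    apply integral_congr_ae
    apply Filter.Eventually.of_forall
    intro k
    rw [hΔdef, hφdef]
    ring
  have hbound1 : c * ‖∫ k, φ k‖ ≤ ∫ k, ‖Δ k‖ := by
    calc c * ‖∫ k, φ k‖ = ‖(Complex.exp (-Complex.I) - 1) * ∫ k, φ k‖ := by
          rw [norm_mul, hcdef]
      _ = ‖∫ k, Δ k * Complex.exp (Complex.I * (⟪k, x⟫ : ℝ))‖ := by rw [hdiff]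
      _ ≤ ∫ k, ‖Δ k * Complex.exp (Complex.I * (⟪k, x⟫ : ℝ))‖ :=
          norm_integral_le_integral_norm _
      _ = ∫ k, ‖Δ k‖ := by
          apply integral_congr_ae
          apply Filter.Eventually.of_forall
          intro k
          simp only [norm_mul, hexp1, mul_one]
  -- main estimate on ∫ ‖Δ‖
  have hrγ : (0:ℝ) < ‖h‖ ^ γ := Real.rpow_pos_of_pos hr _
  set A : Set (EuclideanSpace ℝ (Fin d)) := Metric.closedBall 0 (2 * ‖h‖) with hAdef
  set B : Set (EuclideanSpace ℝ (Fin d)) := Metric.closedBall 0 (3 * ‖h‖) with hBdef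
  have hAmeas : MeasurableSet A := measurableSet_closedBall
  set G : EuclideanSpace ℝ (Fin d) → ℝ :=
    fun k => ‖k‖ ^ (1 - γ) * ‖fderiv ℝ fhat k‖ with hGdef
  have hofrealI2 : ∫⁻ k, ENNReal.ofReal (G k) = ENNReal.ofReal I2 :=
    (ofReal_integral_eq_lintegral_ofReal hI2
      (Filter.Eventually.of_forall fun k => by simp only [hGdef]; positivity)).symm
  have hofrealI1 : ∫⁻ k, ENNReal.ofReal (‖k‖ ^ (-γ) * ‖fhat k‖) = ENNReal.ofReal I1 :=
    (ofReal_integral_eq_lintegral_ofReal hI1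
      (Filter.Eventually.of_forall fun k => by positivity)).symm
  have hfm : AEMeasurable (fun k : EuclideanSpace ℝ (Fin d) => ENNReal.ofReal ‖fhat k‖) volume :=
    ENNReal.measurable_ofReal.comp_aemeasurable hL2.aestronglyMeasurable.norm.aemeasurable
  -- low frequency bound over the ball B
  have hBbound : ∫⁻ k in B, ENNReal.ofReal ‖fhat k‖ ≤
      ENNReal.ofReal ((3 * ‖h‖) ^ γ) * ENNReal.ofReal I1 := by
    have hne : ∀ᵐ (k : EuclideanSpace ℝ (Fin d)) ∂volume, k ≠ 0 := by
      rw [ae_iff]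
      simp only [ne_eq, not_not, Set.setOf_eq_eq_singleton]
      exact h0meas
    have hae : ∀ᵐ k ∂volume, k ∈ B → ENNReal.ofReal ‖fhat k‖ ≤
        ENNReal.ofReal ((3 * ‖h‖) ^ γ * (‖k‖ ^ (-γ) * ‖fhat k‖)) := by
      filter_upwards [hne] with k hk hkB
      have hk0 : (0:ℝ) < ‖k‖ := norm_pos_iff.mpr hk
      have hkle : ‖k‖ ≤ 3 * ‖h‖ := by
        simpa [hBdef, Metric.mem_closedBall, dist_zero_right] using hkB
      apply ENNReal.ofReal_le_ofReal
      have h1 : ‖k‖ ^ γ ≤ (3 * ‖h‖) ^ γ := Real.rpow_le_rpow hk0.le hkle hγ0.le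
      have h2 : ‖k‖ ^ (-γ) = (‖k‖ ^ γ)⁻¹ := Real.rpow_neg hk0.le γ
      have h3 : (0:ℝ) < ‖k‖ ^ γ := Real.rpow_pos_of_pos hk0 _
      calc ‖fhat k‖ = (‖k‖ ^ γ * (‖k‖ ^ γ)⁻¹) * ‖fhat k‖ := by
            rw [mul_inv_cancel₀ h3.ne', one_mul]
        _ ≤ ((3 * ‖h‖) ^ γ * (‖k‖ ^ γ)⁻¹) * ‖fhat k‖ := by
            apply mul_le_mul_of_nonneg_right _ (norm_nonneg _)
            exact mul_le_mul_of_nonneg_right h1 (by positivity)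
        _ = (3 * ‖h‖) ^ γ * (‖k‖ ^ (-γ) * ‖fhat k‖) := by rw [h2]; ring
    calc ∫⁻ k in B, ENNReal.ofReal ‖fhat k‖
        ≤ ∫⁻ k in B, ENNReal.ofReal ((3 * ‖h‖) ^ γ * (‖k‖ ^ (-γ) * ‖fhat k‖)) :=
          lintegral_mono_ae ((ae_restrict_iff' measurableSet_closedBall).2 hae)
      _ ≤ ∫⁻ k, ENNReal.ofReal ((3 * ‖h‖) ^ γ * (‖k‖ ^ (-γ) * ‖fhat k‖)) :=
          setLIntegral_le_lintegral _ _
      _ = ENNReal.ofReal ((3 * ‖h‖) ^ γ) * ∫⁻ k, ENNReal.ofReal (‖k‖ ^ (-γ) * ‖fhat k‖) := by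
          rw [← lintegral_const_mul' _ _ ENNReal.ofReal_ne_top]
          congr 1
          funext k
          rw [ENNReal.ofReal_mul (Real.rpow_nonneg (by positivity) γ)]
      _ = ENNReal.ofReal ((3 * ‖h‖) ^ γ) * ENNReal.ofReal I1 := by rw [hofrealI1]
  -- part A
  have hA1 : ∫⁻ k in A, ENNReal.ofReal ‖fhat (k + h)‖ ≤
      ∫⁻ k in B, ENNReal.ofReal ‖fhat k‖ := by
    have hpt : ∀ k, A.indicator (fun k => ENNReal.ofReal ‖fhat (k + h)‖) k ≤
        B.indicator (fun y => ENNReal.ofReal ‖fhat y‖) (k + h) := by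
      intro k
      by_cases hkA : k ∈ A
      · rw [Set.indicator_of_mem hkA]
        have hkB : k + h ∈ B := by
          have hkn : ‖k‖ ≤ 2 * ‖h‖ := by
            simpa [hAdef, Metric.mem_closedBall, dist_zero_right] using hkA
          have : ‖k + h‖ ≤ 3 * ‖h‖ := by
            calc ‖k + h‖ ≤ ‖k‖ + ‖h‖ := norm_add_le _ _
              _ ≤ 3 * ‖h‖ := by linarith
          simpa [hBdef, Metric.mem_closedBall, dist_zero_right] using this
        rw [Set.indicator_of_mem hkB]
      · rw [Set.indicator_of_notMem hkA]
        exact zero_le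
    calc ∫⁻ k in A, ENNReal.ofReal ‖fhat (k + h)‖
        = ∫⁻ k, A.indicator (fun k => ENNReal.ofReal ‖fhat (k + h)‖) k :=
          (lintegral_indicator hAmeas _).symm
      _ ≤ ∫⁻ k, B.indicator (fun y => ENNReal.ofReal ‖fhat y‖) (k + h) := lintegral_mono hpt
      _ = ∫⁻ y, B.indicator (fun y => ENNReal.ofReal ‖fhat y‖) y :=
          lintegral_add_right_eq_self _ h
      _ = ∫⁻ k in B, ENNReal.ofReal ‖fhat k‖ := by
          rw [lintegral_indicator measurableSet_closedBall]
  have hA2 : ∫⁻ k in A, ENNReal.ofReal ‖fhat k‖ ≤ ∫⁻ k in B, ENNReal.ofReal ‖fhat k‖ :=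
    lintegral_mono_set (Metric.closedBall_subset_closedBall (by linarith))
  have hApart : ∫⁻ k in A, ENNReal.ofReal ‖Δ k‖ ≤
      2 * (ENNReal.ofReal ((3 * ‖h‖) ^ γ) * ENNReal.ofReal I1) := by
    calc ∫⁻ k in A, ENNReal.ofReal ‖Δ k‖
        ≤ ∫⁻ k in A, (ENNReal.ofReal ‖fhat (k + h)‖ + ENNReal.ofReal ‖fhat k‖) := by
          apply lintegral_mono
          intro k
          exact (ENNReal.ofReal_le_ofReal (norm_sub_le _ _)).trans ENNReal.ofReal_add_le
      _ = (∫⁻ k in A, ENNReal.ofReal ‖fhat (k + h)‖) + ∫⁻ k in A, ENNReal.ofReal ‖fhat k‖ :=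
          lintegral_add_right' _ hfm.restrict
      _ ≤ (ENNReal.ofReal ((3 * ‖h‖) ^ γ) * ENNReal.ofReal I1) +
          (ENNReal.ofReal ((3 * ‖h‖) ^ γ) * ENNReal.ofReal I1) :=
          add_le_add (hA1.trans hBbound) (hA2.trans hBbound)
      _ = 2 * (ENNReal.ofReal ((3 * ‖h‖) ^ γ) * ENNReal.ofReal I1) := (two_mul _).symm
  -- part Aᶜ
  have hGmeas : Measurable G := by
    apply Measurable.mul
    · apply Continuous.measurable
      rw [continuous_iff_continuousAt]
      intro y
      exact ContinuousAt.comp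
        (Real.continuousAt_rpow_const _ _ (Or.inr (by linarith))) continuous_norm.continuousAt
    · exact (measurable_fderiv ℝ fhat).norm
  have hswapmeas : AEMeasurable
      (Function.uncurry fun (k : EuclideanSpace ℝ (Fin d)) (t : ℝ) =>
        ENNReal.ofReal (G (k + t • h)))
      ((volume : Measure (EuclideanSpace ℝ (Fin d))).prod
        (volume.restrict (Set.Ioc (0:ℝ) 1))) := by
    apply Measurable.aemeasurable
    have : Measurable (fun p : (EuclideanSpace ℝ (Fin d)) × ℝ =>
        ENNReal.ofReal (G (p.1 + p.2 • h))) :=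
      ENNReal.measurable_ofReal.comp
        (hGmeas.comp (measurable_fst.add (measurable_snd.smul_const h)))
    exact this
  have hFtotal : ∫⁻ k, ∫⁻ t in Set.Ioc (0:ℝ) 1, ENNReal.ofReal (G (k + t • h)) ≤
      ENNReal.ofReal I2 := by
    rw [lintegral_lintegral_swap hswapmeas]
    apply le_of_eq
    have hval : ∀ t : ℝ, ∫⁻ k, ENNReal.ofReal (G (k + t • h)) = ENNReal.ofReal I2 := by
      intro t
      rw [lintegral_add_right_eq_self (fun y => ENNReal.ofReal (G y)) (t • h), hofrealI2]
    calc ∫⁻ t in Set.Ioc (0:ℝ) 1, ∫⁻ k, ENNReal.ofReal (G (k + t • h))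
        = ∫⁻ _ in Set.Ioc (0:ℝ) 1, ENNReal.ofReal I2 := lintegral_congr fun t => hval t
      _ = ENNReal.ofReal I2 * volume (Set.Ioc (0:ℝ) 1) := setLIntegral_const _ _
      _ = ENNReal.ofReal I2 := by rw [Real.volume_Ioc]; norm_num
  have hAc : ∫⁻ k in Aᶜ, ENNReal.ofReal ‖Δ k‖ ≤
      ENNReal.ofReal (‖h‖ ^ γ) * ENNReal.ofReal I2 := by
    have hkey : ∀ k ∈ Aᶜ, ENNReal.ofReal ‖Δ k‖ ≤
        ENNReal.ofReal (‖h‖ ^ γ) * ∫⁻ t in Set.Ioc (0:ℝ) 1, ENNReal.ofReal (G (k + t • h)) := by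
      intro k hk
      have hk2 : 2 * ‖h‖ < ‖k‖ := by
        simp only [hAdef, Set.mem_compl_iff, Metric.mem_closedBall, dist_zero_right,
          not_le] at hk
        exact hk
      exact frac_seg_bound' hγ1 fhat hC1 h hr k hk2
    calc ∫⁻ k in Aᶜ, ENNReal.ofReal ‖Δ k‖
        ≤ ∫⁻ k in Aᶜ, ENNReal.ofReal (‖h‖ ^ γ) *
            ∫⁻ t in Set.Ioc (0:ℝ) 1, ENNReal.ofReal (G (k + t • h)) :=
          lintegral_mono_ae ((ae_restrict_iff' hAmeas.compl).2 (Filter.Eventually.of_forall hkey))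
      _ ≤ ∫⁻ k, ENNReal.ofReal (‖h‖ ^ γ) *
            ∫⁻ t in Set.Ioc (0:ℝ) 1, ENNReal.ofReal (G (k + t • h)) :=
          setLIntegral_le_lintegral _ _
      _ = ENNReal.ofReal (‖h‖ ^ γ) *
            ∫⁻ k, ∫⁻ t in Set.Ioc (0:ℝ) 1, ENNReal.ofReal (G (k + t • h)) :=
          lintegral_const_mul' _ _ ENNReal.ofReal_ne_top
      _ ≤ ENNReal.ofReal (‖h‖ ^ γ) * ENNReal.ofReal I2 := mul_le_mul_right hFtotal _
  -- combine
  have hb1nn : (0:ℝ) ≤ 2 * (3 * ‖h‖) ^ γ * I1 :=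
    mul_nonneg (by positivity) hI1nn
  have hb2nn : (0:ℝ) ≤ ‖h‖ ^ γ * I2 := mul_nonneg hrγ.le hI2nn
  have hΔbound : ∫ k, ‖Δ k‖ ≤ 2 * (3 * ‖h‖) ^ γ * I1 + ‖h‖ ^ γ * I2 := by
    have hofR : ENNReal.ofReal (∫ k, ‖Δ k‖) = ∫⁻ k, ENNReal.ofReal ‖Δ k‖ :=
      ofReal_integral_eq_lintegral_ofReal hΔint.norm
        (Filter.Eventually.of_forall fun k => norm_nonneg _)
    have hsum : ∫⁻ k, ENNReal.ofReal ‖Δ k‖ ≤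
        ENNReal.ofReal (2 * (3 * ‖h‖) ^ γ * I1 + ‖h‖ ^ γ * I2) := by
      rw [← lintegral_add_compl (fun k => ENNReal.ofReal ‖Δ k‖) hAmeas]
      calc (∫⁻ k in A, ENNReal.ofReal ‖Δ k‖) + ∫⁻ k in Aᶜ, ENNReal.ofReal ‖Δ k‖
          ≤ 2 * (ENNReal.ofReal ((3 * ‖h‖) ^ γ) * ENNReal.ofReal I1) +
            ENNReal.ofReal (‖h‖ ^ γ) * ENNReal.ofReal I2 := add_le_add hApart hAc
        _ = ENNReal.ofReal (2 * (3 * ‖h‖) ^ γ * I1 + ‖h‖ ^ γ * I2) := by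
            have h3r : (0:ℝ) ≤ (3 * ‖h‖) ^ γ := Real.rpow_nonneg (by linarith) γ
            rw [ENNReal.ofReal_add hb1nn hb2nn,
              ENNReal.ofReal_mul (mul_nonneg (by norm_num) h3r),
              ENNReal.ofReal_mul (by norm_num : (0:ℝ) ≤ 2),
              ENNReal.ofReal_mul hrγ.le, ENNReal.ofReal_ofNat]
            ring
    rw [← hofR] at hsum
    exact (ENNReal.ofReal_le_ofReal_iff (by linarith)).1 hsum
  -- final computation
  have hrx : ‖h‖ ^ γ = ‖x‖ ^ (-γ) := by
    rw [hhn, Real.inv_rpow (norm_nonneg x), Real.rpow_neg (norm_nonneg x)]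
  have hmulrpow : (3 * ‖h‖) ^ γ = 3 ^ γ * ‖h‖ ^ γ := Real.mul_rpow (by norm_num) hr.le
  have h2 : ∫ k, ‖Δ k‖ ≤ (2 * 3 ^ γ + 1) * (‖h‖ ^ γ * (I1 + I2)) := by
    rw [hmulrpow] at hΔbound
    nlinarith [mul_nonneg hrγ.le hI1nn, mul_nonneg hrγ.le hI2nn,
      mul_nonneg h3γ.le (mul_nonneg hrγ.le hI1nn), mul_nonneg h3γ.le (mul_nonneg hrγ.le hI2nn)]
  have hfinal : ‖∫ k, φ k‖ ≤ c⁻¹ * ((2 * 3 ^ γ + 1) * (‖h‖ ^ γ * (I1 + I2))) := by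
    have hch := hbound1.trans h2
    calc ‖∫ k, φ k‖ = c⁻¹ * (c * ‖∫ k, φ k‖) := by
          rw [← mul_assoc, inv_mul_cancel₀ hc0.ne', one_mul]
      _ ≤ c⁻¹ * ((2 * 3 ^ γ + 1) * (‖h‖ ^ γ * (I1 + I2))) :=
          mul_le_mul_of_nonneg_left hch (inv_nonneg.mpr hc0.le)
  rw [hrx] at hfinal
  calc ‖∫ k, φ k‖ ≤ c⁻¹ * ((2 * 3 ^ γ + 1) * (‖x‖ ^ (-γ) * (I1 + I2))) := hfinal
    _ = c⁻¹ * (2 * 3 ^ γ + 1) * ‖x‖ ^ (-γ) * (I1 + I2) := by ring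
end

section
/- Let ζ : ℝ → ℂ be a Schwartz-type function satisfying |∂ⁿζ(x)| ≤ C(n,N) ⟨x⟩^{-N} for all n, N. Then for every N > 0 there is a constant C such that for all t > 0 and ω₊ ≥ 0, ∫₀^{π/2} (sin θ)^{d-2} ⟨(1/4) t² θ² ω₊²⟩^{-N/2} dθ ≤ C (1 + t ω₊)^{1-d}, where d ≥ 3 and N is taken large enough (N ≥ d suffices). -/
open Real intervalIntegral

/-- Japanese bracket `⟨x⟩ = √(x²+1)`. -/
noncomputable def jbracket (x : ℝ) : ℝ := Real.sqrt (x ^ 2 + 1)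

lemma jbracket_pos (x : ℝ) : 0 < jbracket x := by
  unfold jbracket; positivity

lemma jbracket_cont : Continuous jbracket := by
  unfold jbracket; fun_prop

/-- key pointwise lower bound: `⟨a²θ²/4⟩ ≥ (1+aθ)²/(8√2)` for `a, θ ≥ 0`. -/
lemma jbracket_lb (a θ : ℝ) (ha : 0 ≤ a) (hθ : 0 ≤ θ) :
    (1 + a*θ)^2 / (8 * Real.sqrt 2) ≤ jbracket ((1/4) * a^2 * θ^2) := by
  have h2 : (1:ℝ) ≤ Real.sqrt 2 := by
    rw [show (1:ℝ) = Real.sqrt 1 by simp]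
    exact Real.sqrt_le_sqrt (by norm_num)
  have h2' : Real.sqrt 2 ^ 2 = 2 := Real.sq_sqrt (by norm_num)
  have haθ : 0 ≤ a * θ := mul_nonneg ha hθ
  unfold jbracket
  rw [Real.le_sqrt (by positivity) (by positivity)]
  rw [div_pow]
  rw [div_le_iff₀ (by positivity)]
  have expand : ((8:ℝ) * Real.sqrt 2)^2 = 128 := by
    rw [mul_pow, h2']; norm_num
  rw [expand]
  nlinarith [sq_nonneg (a*θ), sq_nonneg (a*θ - 1), sq_nonneg ((a*θ)^2 - 4),
    sq_nonneg (1 + a*θ), pow_le_pow_left₀ (by positivity : (0:ℝ) ≤ (1+a*θ)^2)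
      (by nlinarith [sq_nonneg (a*θ - 1)] : (1+a*θ)^2 ≤ 2 + 2*(a*θ)^2) 2]

set_option maxHeartbeats 1000000 in
/-- Main estimate in terms of `a = tω`. -/
lemma angular_helper (d : ℕ) (hd : 3 ≤ d) (N : ℝ) (hN : (d : ℝ) ≤ N) :
    ∃ C > 0, ∀ a : ℝ, 0 ≤ a →
      (∫ θ in (0:ℝ)..(π / 2),
          (Real.sin θ) ^ (d - 2) * (jbracket ((1/4) * a ^ 2 * θ ^ 2)) ^ (-(N / 2)))
        ≤ C * (1 + a) ^ ((1 : ℝ) - d) := by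
  have hdR : (3:ℝ) ≤ (d:ℝ) := by exact_mod_cast hd
  have hNpos : 0 < N := lt_of_lt_of_le (by linarith) hN
  set K : ℝ := (8 * Real.sqrt 2) ^ (N/2) with hKdef
  have hs2 : (0:ℝ) < Real.sqrt 2 := Real.sqrt_pos.mpr (by norm_num)
  have hK : 0 < K := Real.rpow_pos_of_pos (by positivity) _
  have hπ : (0:ℝ) < π/2 := by positivity
  refine ⟨K * (2:ℝ) ^ ((d:ℝ) - 1) * ((π/2) ^ ((d:ℝ) - 1) + 1), by positivity, ?_⟩
  intro a ha
  set C : ℝ := K * (2:ℝ) ^ ((d:ℝ) - 1) * ((π/2) ^ ((d:ℝ) - 1) + 1) with hCdef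
  have hCpos : 0 < C := by rw [hCdef]; positivity
  -- continuity of the integrand
  have hcont : Continuous (fun θ : ℝ =>
      (Real.sin θ) ^ (d - 2) * (jbracket ((1/4) * a ^ 2 * θ ^ 2)) ^ (-(N / 2))) := by
    apply Continuous.mul
    · exact Real.continuous_sin.pow _
    · apply Continuous.rpow_const
      · exact jbracket_cont.comp (by fun_prop)
      · intro x; exact Or.inl (ne_of_gt (jbracket_pos _))
  -- pointwise bound
  have hpt : ∀ θ ∈ Set.Icc (0:ℝ) (π/2),
      (Real.sin θ) ^ (d - 2) * (jbracket ((1/4) * a ^ 2 * θ ^ 2)) ^ (-(N / 2))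
        ≤ K * (θ ^ (d - 2) * (1 + a*θ) ^ (-N)) := by
    intro θ hθ
    obtain ⟨hθ0, hθπ⟩ := hθ
    have hsin0 : 0 ≤ Real.sin θ := Real.sin_nonneg_of_nonneg_of_le_pi hθ0
      (le_trans hθπ (by linarith [Real.pi_pos]))
    have hbase : (0:ℝ) < 1 + a*θ := by nlinarith
    have hjb : (1 + a*θ)^2 / (8 * Real.sqrt 2) ≤ jbracket ((1/4) * a^2 * θ^2) :=
      jbracket_lb a θ ha hθ0
    have h1 : (jbracket ((1/4) * a ^ 2 * θ ^ 2)) ^ (-(N / 2))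
        ≤ ((1 + a*θ)^2 / (8 * Real.sqrt 2)) ^ (-(N / 2)) :=
      Real.rpow_le_rpow_of_nonpos (by positivity) hjb (by linarith)
    have e : (((1 + a*θ)^2 : ℝ)) ^ (-(N/2)) = (1 + a*θ) ^ (-N) := by
      rw [← Real.rpow_natCast (1 + a*θ) 2, ← Real.rpow_mul hbase.le]
      congr 1
      ring
    have h2 : ((1 + a*θ)^2 / (8 * Real.sqrt 2)) ^ (-(N / 2)) = K * (1 + a*θ) ^ (-N) := by
      rw [Real.div_rpow (by positivity) (by positivity), e,
        Real.rpow_neg (by positivity : (0:ℝ) ≤ 8 * Real.sqrt 2), div_eq_mul_inv,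
        inv_inv, hKdef]
      ring
    have h3 : (Real.sin θ) ^ (d-2) ≤ θ ^ (d-2) :=
      pow_le_pow_left₀ hsin0 (Real.sin_le hθ0) _
    calc (Real.sin θ) ^ (d - 2) * (jbracket ((1/4) * a ^ 2 * θ ^ 2)) ^ (-(N / 2))
        ≤ θ ^ (d-2) * (K * (1 + a*θ) ^ (-N)) := by
          rw [← h2]
          exact mul_le_mul h3 h1 (Real.rpow_nonneg (le_of_lt (jbracket_pos _)) _)
            (by positivity)
      _ = K * (θ ^ (d - 2) * (1 + a*θ) ^ (-N)) := by ring
  rcases le_total a 1 with hale | hage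
  · -- small a: bound integrand by a constant
    have hptc : ∀ θ ∈ Set.Icc (0:ℝ) (π/2),
        (Real.sin θ) ^ (d - 2) * (jbracket ((1/4) * a ^ 2 * θ ^ 2)) ^ (-(N / 2))
          ≤ K * (π/2) ^ (d-2) := by
      intro θ hθ
      refine le_trans (hpt θ hθ) ?_
      obtain ⟨hθ0, hθπ⟩ := hθ
      have hbase : (1:ℝ) ≤ 1 + a*θ := by nlinarith
      have h4 : (1 + a*θ) ^ (-N) ≤ 1 :=
        Real.rpow_le_one_of_one_le_of_nonpos hbase (by linarith)
      have h5 : θ ^ (d-2) ≤ (π/2) ^ (d-2) := pow_le_pow_left₀ hθ0 hθπ _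
      calc K * (θ ^ (d - 2) * (1 + a*θ) ^ (-N))
          ≤ K * ((π/2) ^ (d-2) * 1) := by
            apply mul_le_mul_of_nonneg_left _ (le_of_lt hK)
            exact mul_le_mul h5 h4 (Real.rpow_nonneg (by positivity) _) (by positivity)
        _ = K * (π/2) ^ (d-2) := by ring
    have hint : (∫ θ in (0:ℝ)..(π / 2),
          (Real.sin θ) ^ (d - 2) * (jbracket ((1/4) * a ^ 2 * θ ^ 2)) ^ (-(N / 2)))
        ≤ (π/2) * (K * (π/2) ^ (d-2)) := by
      have h := intervalIntegral.integral_mono_on (le_of_lt hπ)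
        (hcont.intervalIntegrable _ _)
        (intervalIntegrable_const (μ := MeasureTheory.volume)) hptc
      rw [intervalIntegral.integral_const, smul_eq_mul] at h
      refine le_trans h (le_of_eq (by ring))
    refine le_trans hint ?_
    have hd1 : ((d:ℝ) - 1) = ((d - 1 : ℕ) : ℝ) := by
      have h1 : (1:ℕ) ≤ d := by omega
      push_cast [h1]; ring
    have e1 : (π/2) * (K * (π/2) ^ (d-2)) = K * (π/2) ^ ((d:ℝ)-1) := by
      rw [hd1, Real.rpow_natCast]
      rw [show d - 1 = (d-2) + 1 by omega, pow_succ]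
      ring
    have h2d : (2:ℝ) ^ ((1:ℝ) - d) ≤ (1 + a) ^ ((1:ℝ) - d) :=
      Real.rpow_le_rpow_of_nonpos (by linarith) (by linarith) (by linarith)
    have c1 : C * (2:ℝ) ^ ((1:ℝ) - d) = K * ((π/2) ^ ((d:ℝ)-1) + 1) := by
      have h22 : (2:ℝ) ^ ((d:ℝ)-1) * (2:ℝ) ^ ((1:ℝ)-d) = 1 := by
        rw [← Real.rpow_add (by norm_num : (0:ℝ) < 2)]
        norm_num
      calc C * (2:ℝ) ^ ((1:ℝ) - d)
          = K * ((π/2) ^ ((d:ℝ)-1) + 1) * ((2:ℝ) ^ ((d:ℝ)-1) * (2:ℝ) ^ ((1:ℝ)-d)) := by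
            rw [hCdef]; ring
        _ = K * ((π/2) ^ ((d:ℝ)-1) + 1) := by rw [h22, mul_one]
    rw [e1]
    calc K * (π/2) ^ ((d:ℝ)-1)
        ≤ K * ((π/2) ^ ((d:ℝ)-1) + 1) := by nlinarith
      _ = C * (2:ℝ) ^ ((1:ℝ) - d) := c1.symm
      _ ≤ C * (1 + a) ^ ((1:ℝ) - d) := mul_le_mul_of_nonneg_left h2d hCpos.le
  · -- large a
    have ha0 : (0:ℝ) < a := lt_of_lt_of_le one_pos hage
    set g : ℝ → ℝ := fun θ => ((1 + a*θ)^2)⁻¹ with hg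
    have hd2 : ((d - 2 : ℕ) : ℝ) = (d:ℝ) - 2 := by
      have h1 : (2:ℕ) ≤ d := by omega
      push_cast [h1]; ring
    have hgcontOn : ContinuousOn g (Set.uIcc (0:ℝ) (π/2)) := by
      apply ContinuousOn.inv₀ (by fun_prop)
      intro θ hθ
      rw [Set.uIcc_of_le hπ.le] at hθ
      have : (0:ℝ) < 1 + a*θ := by nlinarith [hθ.1]
      positivity
    have hgint : IntervalIntegrable g MeasureTheory.volume 0 (π/2) :=
      hgcontOn.intervalIntegrable
    -- pointwise bound by (K * a^(2-d)) * g θ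
    have hpt2 : ∀ θ ∈ Set.Icc (0:ℝ) (π/2),
        (Real.sin θ) ^ (d - 2) * (jbracket ((1/4) * a ^ 2 * θ ^ 2)) ^ (-(N / 2))
          ≤ K * a ^ ((2:ℝ) - d) * g θ := by
      intro θ hθ
      refine le_trans (hpt θ hθ) ?_
      obtain ⟨hθ0, hθπ⟩ := hθ
      have hbase : (0:ℝ) < 1 + a*θ := by nlinarith
      have hbase1 : (1:ℝ) ≤ 1 + a*θ := by nlinarith
      have hθle : θ ≤ (1 + a*θ)/a := by
        rw [le_div_iff₀ ha0]; nlinarith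
      have step1 : θ^(d-2) ≤ (1 + a*θ)^(d-2) / a^(d-2) := by
        calc θ^(d-2) ≤ ((1 + a*θ)/a)^(d-2) := pow_le_pow_left₀ hθ0 hθle _
          _ = (1 + a*θ)^(d-2) / a^(d-2) := div_pow _ _ _
      have step2 : ((1 + a*θ):ℝ)^(d-2) * (1 + a*θ)^(-N) ≤ g θ := by
        rw [← Real.rpow_natCast (1 + a*θ) (d-2), ← Real.rpow_add hbase]
        have hexp : ((d-2:ℕ):ℝ) + (-N) ≤ -2 := by rw [hd2]; linarith
        calc (1 + a*θ) ^ (((d-2:ℕ):ℝ) + (-N))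
            ≤ (1 + a*θ) ^ (-2:ℝ) := Real.rpow_le_rpow_of_exponent_le hbase1 hexp
          _ = g θ := by
              rw [show (-2:ℝ) = -((2:ℕ):ℝ) by norm_num, Real.rpow_neg hbase.le,
                Real.rpow_natCast]
      have hainv : ((a^(d-2):ℝ))⁻¹ = a ^ ((2:ℝ) - d) := by
        rw [← Real.rpow_natCast a (d-2), ← Real.rpow_neg ha0.le]
        congr 1
        rw [hd2]; ring
      have hrnn : (0:ℝ) ≤ (1 + a*θ) ^ (-N) := Real.rpow_nonneg hbase.le _
      calc K * (θ ^ (d - 2) * (1 + a*θ) ^ (-N))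
          ≤ K * (((1 + a*θ)^(d-2) / a^(d-2)) * (1 + a*θ) ^ (-N)) := by
            apply mul_le_mul_of_nonneg_left _ hK.le
            exact mul_le_mul_of_nonneg_right step1 hrnn
        _ = K * ((a^(d-2):ℝ))⁻¹ * ((1 + a*θ)^(d-2) * (1 + a*θ) ^ (-N)) := by ring
        _ ≤ K * ((a^(d-2):ℝ))⁻¹ * g θ := by
            apply mul_le_mul_of_nonneg_left step2
            positivity
        _ = K * a ^ ((2:ℝ) - d) * g θ := by rw [hainv]
    -- integral of g
    have hF : ∀ θ ∈ Set.uIcc (0:ℝ) (π/2),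
        HasDerivAt (fun x => -(a⁻¹ * (1 + a*x)⁻¹)) (g θ) θ := by
      intro θ hθ
      rw [Set.uIcc_of_le hπ.le] at hθ
      have hbase : (0:ℝ) < 1 + a*θ := by nlinarith [hθ.1]
      have h1 : HasDerivAt (fun x : ℝ => 1 + a*x) a θ := by
        simpa using ((hasDerivAt_id θ).const_mul a).const_add 1
      have h3 := ((h1.inv hbase.ne').const_mul a⁻¹).neg
      convert h3 using 1
      · rfl
      · rfl
      · rfl
      rw [hg]
      field_simp
    have hgval : (∫ θ in (0:ℝ)..(π/2), g θ)
        = -(a⁻¹ * (1 + a*(π/2))⁻¹) - -(a⁻¹ * (1 + a*0)⁻¹) :=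
      intervalIntegral.integral_eq_sub_of_hasDerivAt hF hgint
    have hgle : (∫ θ in (0:ℝ)..(π/2), g θ) ≤ a⁻¹ := by
      rw [hgval]
      have hb : (0:ℝ) < 1 + a*(π/2) := by positivity
      have h0 : (0:ℝ) ≤ a⁻¹ * (1 + a*(π/2))⁻¹ := by positivity
      have : a⁻¹ * (1 + a*0)⁻¹ = a⁻¹ := by norm_num
      linarith
    have hmono := intervalIntegral.integral_mono_on hπ.le
      (hcont.intervalIntegrable _ _) (hgint.const_mul (K * a ^ ((2:ℝ) - d))) hpt2
    rw [intervalIntegral.integral_const_mul] at hmono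
    refine le_trans hmono ?_
    have hKa : (0:ℝ) ≤ K * a ^ ((2:ℝ) - d) := by positivity
    have step : K * a ^ ((2:ℝ) - d) * (∫ θ in (0:ℝ)..(π/2), g θ)
        ≤ K * a ^ ((2:ℝ) - d) * a⁻¹ := mul_le_mul_of_nonneg_left hgle hKa
    refine le_trans step ?_
    have e2 : K * a ^ ((2:ℝ) - d) * a⁻¹ = K * a ^ ((1:ℝ) - d) := by
      rw [← Real.rpow_neg_one a, mul_assoc, ← Real.rpow_add ha0]
      rw [show (2:ℝ) - (d:ℝ) + (-1) = 1 - (d:ℝ) by ring]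
    rw [e2]
    have hha : (1 + a)/2 ≤ a := by linarith
    have h6 : a ^ ((1:ℝ) - d) ≤ ((1 + a)/2) ^ ((1:ℝ) - d) := by
      apply Real.rpow_le_rpow_of_nonpos _ hha _
      · linarith
      · linarith
    have e3 : ((1 + a)/2) ^ ((1:ℝ) - d) = (1 + a) ^ ((1:ℝ) - d) * (2:ℝ) ^ ((d:ℝ) - 1) := by
      rw [Real.div_rpow (by linarith) (by norm_num), div_eq_mul_inv]
      congr 1
      rw [← Real.rpow_neg (by norm_num : (0:ℝ) ≤ 2)]
      congr 1
      ring
    have h7 : (0:ℝ) < (1 + a) ^ ((1:ℝ) - d) := Real.rpow_pos_of_pos (by linarith) _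
    calc K * a ^ ((1:ℝ) - d)
        ≤ K * (((1 + a)/2) ^ ((1:ℝ) - d)) := mul_le_mul_of_nonneg_left h6 hK.le
      _ = (K * (2:ℝ) ^ ((d:ℝ) - 1)) * (1 + a) ^ ((1:ℝ) - d) := by rw [e3]; ring
      _ ≤ C * (1 + a) ^ ((1:ℝ) - d) := by
          apply mul_le_mul_of_nonneg_right _ h7.le
          rw [hCdef]
          nlinarith [Real.rpow_pos_of_pos hπ ((d:ℝ)-1),
            mul_pos hK (Real.rpow_pos_of_pos (by norm_num : (0:ℝ) < 2) ((d:ℝ)-1))]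

/-- Angular stationary-phase estimate: for `d ≥ 3` and `N ≥ d`, there is a constant `C`
such that for all `t > 0` and `ω₊ ≥ 0`,
`∫₀^{π/2} (sin θ)^{d-2} ⟨(1/4)t²θ²ω₊²⟩^{-N/2} dθ ≤ C (1 + tω₊)^{1-d}`. -/
theorem angular_integral_bound (d : ℕ) (hd : 3 ≤ d) (N : ℝ) (hN : (d : ℝ) ≤ N) :
    ∃ C > 0, ∀ t : ℝ, 0 < t → ∀ ω : ℝ, 0 ≤ ω →
      (∫ θ in (0:ℝ)..(π / 2),
          (Real.sin θ) ^ (d - 2) * (jbracket ((1/4) * t ^ 2 * θ ^ 2 * ω ^ 2)) ^ (-(N / 2)))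
        ≤ C * (1 + t * ω) ^ ((1 : ℝ) - d) := by
  obtain ⟨C, hC, hbound⟩ := angular_helper d hd N hN
  refine ⟨C, hC, ?_⟩
  intro t ht ω hω
  have heq : (∫ θ in (0:ℝ)..(π / 2),
      (Real.sin θ) ^ (d - 2) * (jbracket ((1/4) * t ^ 2 * θ ^ 2 * ω ^ 2)) ^ (-(N / 2)))
      = ∫ θ in (0:ℝ)..(π / 2),
      (Real.sin θ) ^ (d - 2) * (jbracket ((1/4) * (t*ω) ^ 2 * θ ^ 2)) ^ (-(N / 2)) := by
    apply intervalIntegral.integral_congr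
    intro θ _
    have h : (1/4) * t ^ 2 * θ ^ 2 * ω ^ 2 = (1/4) * (t*ω) ^ 2 * θ ^ 2 := by ring
    simp only [h]
  rw [heq]
  exact hbound (t*ω) (mul_nonneg (le_of_lt ht) hω)
end
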